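/- A constant-sum regular game has convex exploitability: if the strategy sets S_i are convex subsets of real vector spaces, Σ_i u_i(x) is constant in x, and each u_i(x) = f_i(x_i) + Σ_{j ≠ i} g_{ij}(x_i, x_j) with each g_{ij} convex in its second argument, then the exploitability Φ(x) = Σ_i (sup_{y_i ∈ S_i} u_i(y_i, x_{-i}) - u_i(x)) is a convex function of the profile x. -/
import Mathlib


/-- A constant-sum regular game has convex exploitability. -/
theorem regular_game_convex_exploitability {I : Type*} [Fintype I] [DecidableEq I]
    {n : I → ℕ} (S : ∀ i, Set (Fin (n i) → ℝ)) (hS : ∀ i, Convex ℝ (S i))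
    (hSne : ∀ i, (S i).Nonempty)
    (f : ∀ i, (Fin (n i) → ℝ) → ℝ)
    (g : ∀ i j, (Fin (n i) → ℝ) → (Fin (n j) → ℝ) → ℝ)
    (hg : ∀ i j, ∀ a : Fin (n i) → ℝ, ConvexOn ℝ (S j) (g i j a))
    (u : ∀ i, (∀ k, Fin (n k) → ℝ) → ℝ)
    (hu : ∀ i x, u i x = f i (x i) + ∑ j ∈ Finset.univ \ {i}, g i j (x i) (x j))
    (c : ℝ) (hconst : ∀ x ∈ Set.univ.pi S, ∑ i, u i x = c)
    (hbdd : ∀ x ∈ Set.univ.pi S, ∀ i,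
      BddAbove {v : ℝ | ∃ y ∈ S i, v = u i (Function.update x i y)}) :
    ConvexOn ℝ (Set.univ.pi S)
      (fun x => ∑ i,
        (sSup {v : ℝ | ∃ y ∈ S i, v = u i (Function.update x i y)} - u i x)) := by
  have hpi : Convex ℝ (Set.univ.pi S) := convex_pi (fun i _ => hS i)
  refine ⟨hpi, ?_⟩
  intro x hx z hz a b ha hb hab
  have hw : a • x + b • z ∈ Set.univ.pi S := hpi hx hz ha hb hab
  have hup : ∀ (i : I) (p : ∀ k, Fin (n k) → ℝ) (y : Fin (n i) → ℝ),
      u i (Function.update p i y)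
        = f i y + ∑ j ∈ Finset.univ \ {i}, g i j y (p j) := by
    intro i p y
    rw [hu]
    congr 1
    · rw [Function.update_self]
    · refine Finset.sum_congr rfl (fun j hj => ?_)
      have hj' : j ≠ i := by
        simp only [Finset.mem_sdiff, Finset.mem_singleton] at hj
        exact hj.2
      rw [Function.update_self, Function.update_of_ne hj']
  have hsum : ∀ p ∈ Set.univ.pi S,
      (∑ i, (sSup {v : ℝ | ∃ y ∈ S i, v = u i (Function.update p i y)} - u i p))
        = (∑ i, sSup {v : ℝ | ∃ y ∈ S i, v = u i (Function.update p i y)}) - c := by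
    intro p hp
    rw [Finset.sum_sub_distrib, hconst p hp]
  simp only [smul_eq_mul]
  rw [hsum _ hw, hsum _ hx, hsum _ hz]
  have key : ∀ i : I,
      sSup {v : ℝ | ∃ y ∈ S i, v = u i (Function.update (a • x + b • z) i y)}
        ≤ a * sSup {v : ℝ | ∃ y ∈ S i, v = u i (Function.update x i y)}
          + b * sSup {v : ℝ | ∃ y ∈ S i, v = u i (Function.update z i y)} := by
    intro i
    obtain ⟨y0, hy0⟩ := hSne i
    refine csSup_le ⟨_, y0, hy0, rfl⟩ ?_
    rintro v ⟨y, hy, rfl⟩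
    have h1 : u i (Function.update x i y)
        ≤ sSup {v : ℝ | ∃ y ∈ S i, v = u i (Function.update x i y)} :=
      le_csSup (hbdd x hx i) ⟨y, hy, rfl⟩
    have h2 : u i (Function.update z i y)
        ≤ sSup {v : ℝ | ∃ y ∈ S i, v = u i (Function.update z i y)} :=
      le_csSup (hbdd z hz i) ⟨y, hy, rfl⟩
    have hconv : ∀ j ∈ Finset.univ \ {i},
        g i j y ((a • x + b • z) j) ≤ a * g i j y (x j) + b * g i j y (z j) := by
      intro j _
      have := (hg i j y).2 (hx j (Set.mem_univ j)) (hz j (Set.mem_univ j)) ha hb hab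
      simpa using this
    have hsle : ∑ j ∈ Finset.univ \ {i}, g i j y ((a • x + b • z) j)
        ≤ ∑ j ∈ Finset.univ \ {i}, (a * g i j y (x j) + b * g i j y (z j)) :=
      Finset.sum_le_sum hconv
    have hux : u i (Function.update x i y)
        = f i y + ∑ j ∈ Finset.univ \ {i}, g i j y (x j) := hup i x y
    have huz : u i (Function.update z i y)
        = f i y + ∑ j ∈ Finset.univ \ {i}, g i j y (z j) := hup i z y
    have huw : u i (Function.update (a • x + b • z) i y)
        = f i y + ∑ j ∈ Finset.univ \ {i}, g i j y ((a • x + b • z) j) :=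
      hup i (a • x + b • z) y
    have hexp : ∑ j ∈ Finset.univ \ {i}, (a * g i j y (x j) + b * g i j y (z j))
        = a * ∑ j ∈ Finset.univ \ {i}, g i j y (x j)
          + b * ∑ j ∈ Finset.univ \ {i}, g i j y (z j) := by
      rw [Finset.sum_add_distrib, Finset.mul_sum, Finset.mul_sum]
    have step : u i (Function.update (a • x + b • z) i y)
        ≤ a * u i (Function.update x i y) + b * u i (Function.update z i y) := by
      rw [huw, hux, huz]
      have : f i y = a * f i y + b * f i y := by rw [← add_mul, hab, one_mul]
      nlinarith [hsle, hexp]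
    nlinarith [mul_le_mul_of_nonneg_left h1 ha, mul_le_mul_of_nonneg_left h2 hb]
  have hsumle : ∑ i, sSup {v : ℝ | ∃ y ∈ S i, v = u i (Function.update (a • x + b • z) i y)}
      ≤ a * (∑ i, sSup {v : ℝ | ∃ y ∈ S i, v = u i (Function.update x i y)})
        + b * (∑ i, sSup {v : ℝ | ∃ y ∈ S i, v = u i (Function.update z i y)}) := by
    calc _ ≤ ∑ i, (a * sSup {v : ℝ | ∃ y ∈ S i, v = u i (Function.update x i y)}
          + b * sSup {v : ℝ | ∃ y ∈ S i, v = u i (Function.update z i y)}) :=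
        Finset.sum_le_sum (fun i _ => key i)
      _ = _ := by rw [Finset.sum_add_distrib, Finset.mul_sum, Finset.mul_sum]
  have hc : a * (∑ i, sSup {v : ℝ | ∃ y ∈ S i, v = u i (Function.update x i y)} - c)
      + b * (∑ i, sSup {v : ℝ | ∃ y ∈ S i, v = u i (Function.update z i y)} - c)
      = a * (∑ i, sSup {v : ℝ | ∃ y ∈ S i, v = u i (Function.update x i y)})
        + b * (∑ i, sSup {v : ℝ | ∃ y ∈ S i, v = u i (Function.update z i y)}) - c := by
    linear_combination (-c) * hab
  linarith [hsumle, hc]
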